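/- Let G be a finite simple graph, let x* be an optimal solution of the LP relaxation LPR of the vertex cover problem on G, let I₀ = {i : x*_i = 0}, I₁ = {i : x*_i = 1}, let Ḡ = G \ (I₀ ∪ I₁), and let γ ≥ 1. If R is a γ-optimal vertex cover of Ḡ, then R ∪ I₁ is a γ-optimal vertex cover of G. -/

import Mathlib

variable {V : Type*} [Fintype V] [DecidableEq V]

/-- `S` is a vertex cover of `G`: every edge has at least one endpoint in `S`. -/
def IsVertexCover (G : SimpleGraph V) (S : Finset V) : Prop :=
  ∀ ⦃a b : V⦄, G.Adj a b → a ∈ S ∨ b ∈ S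

/-- `x` is feasible for the LP relaxation LPR of the vertex cover problem on `G`:
`x_i + x_j ≥ 1` for every edge `(i,j)` and `x_i ≥ 0` for all `i`. -/
def LPFeasible (G : SimpleGraph V) (x : V → ℝ) : Prop :=
  (∀ i : V, 0 ≤ x i) ∧ ∀ ⦃i j : V⦄, G.Adj i j → 1 ≤ x i + x j

/-- `x` is an optimal solution of the LP relaxation LPR on `G`. -/
def LPOptimal (G : SimpleGraph V) (x : V → ℝ) : Prop :=
  LPFeasible G x ∧ ∀ y : V → ℝ, LPFeasible G y → ∑ i : V, x i ≤ ∑ i : V, y i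

/-- `G \ D`: the induced subgraph of `G` on `V \ D`, viewed as a graph on the same
vertex type by deleting all edges meeting `D`. -/
def DeleteVerts (G : SimpleGraph V) (D : Finset V) : SimpleGraph V where
  Adj a b := G.Adj a b ∧ a ∉ D ∧ b ∉ D
  symm := ⟨fun _ _ h => ⟨h.1.symm, h.2.2, h.2.1⟩⟩
  loopless := ⟨fun a h => G.irrefl h.1⟩

/-- `S` is an optimal vertex cover of `G`: a vertex cover of minimum cardinality. -/
def IsOptimalVertexCover (G : SimpleGraph V) (S : Finset V) : Prop :=
  IsVertexCover G S ∧ ∀ T : Finset V, IsVertexCover G T → S.card ≤ T.card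

open Finset

lemma lp_le_one (G : SimpleGraph V) (x : V → ℝ) (hx : LPOptimal G x) (i : V) : x i ≤ 1 := by
  by_contra h
  push_neg at h
  have hyfeas : LPFeasible G (fun j => min (x j) 1) := by
    refine ⟨fun j => le_min (hx.1.1 j) zero_le_one, fun a b hab => ?_⟩
    rcases le_or_gt (x a) 1 with h1 | h1
    · rcases le_or_gt (x b) 1 with h2 | h2
      · simpa [min_eq_left h1, min_eq_left h2] using hx.1.2 hab
      · have hb : min (x b) 1 = 1 := min_eq_right h2.le
        have ha : 0 ≤ min (x a) 1 := le_min (hx.1.1 a) zero_le_one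
        simp only [hb]; linarith
    · have ha : min (x a) 1 = 1 := min_eq_right h1.le
      have hb : 0 ≤ min (x b) 1 := le_min (hx.1.1 b) zero_le_one
      simp only [ha]; linarith
  have hle : ∑ j : V, x j ≤ ∑ j : V, min (x j) 1 := hx.2 _ hyfeas
  have hlt : ∑ j : V, min (x j) 1 < ∑ j : V, x j := by
    apply Finset.sum_lt_sum (fun j _ => min_le_left _ _)
    exact ⟨i, mem_univ i, by simpa [min_eq_right h.le] using h⟩
  linarith

/-- Key NT counting lemma: for any optimal cover S0, |I1 \ S0| ≤ |I0 ∩ S0|. -/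
lemma key_count (G : SimpleGraph V) (x : V → ℝ) (hx : LPOptimal G x)
    (I0 I1 : Finset V) (hI0 : ∀ i : V, i ∈ I0 ↔ x i = 0) (hI1 : ∀ i : V, i ∈ I1 ↔ x i = 1)
    (S0 : Finset V) (hS0 : IsVertexCover G S0) :
    (I1 \ S0).card ≤ (I0 ∩ S0).card := by
  set A := I1 \ S0 with hA
  set B := I0 ∩ S0 with hB
  rcases A.eq_empty_or_nonempty with hAe | hAne
  · simp [hAe]
  obtain ⟨a0, ha0⟩ := hAne
  have hxa0 : x a0 = 1 := (hI1 a0).1 (mem_sdiff.1 ha0).1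
  have hP : (univ.filter (fun j => 0 < x j)).Nonempty :=
    ⟨a0, by simp [hxa0]⟩
  obtain ⟨j0, hj0mem, hj0min⟩ := Finset.exists_min_image _ x hP
  set ε := x j0 with hε
  have hεpos : 0 < ε := (mem_filter.1 hj0mem).2
  have hεle : ∀ j : V, 0 < x j → ε ≤ x j := fun j hj => hj0min j (by simp [hj])
  have hεone : ε ≤ 1 := by
    have := hεle a0 (by rw [hxa0]; exact one_pos)
    rwa [hxa0] at this
  have hABdisj : ∀ j, j ∈ A → j ∉ B := by
    intro j hjA hjB
    have h1 : x j = 1 := (hI1 j).1 (mem_sdiff.1 hjA).1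
    have h0 : x j = 0 := (hI0 j).1 (mem_inter.1 hjB).1
    rw [h0] at h1; norm_num at h1
  set y : V → ℝ := fun j => x j - (if j ∈ A then ε else 0) + (if j ∈ B then ε else 0) with hy
  have hyfeas : LPFeasible G y := by
    constructor
    · intro j
      by_cases hjA : j ∈ A
      · have h1 : x j = 1 := (hI1 j).1 (mem_sdiff.1 hjA).1
        simp only [hy, hjA, if_pos, hABdisj j hjA, if_neg, not_false_iff]
        rw [h1]; linarith
      · by_cases hjB : j ∈ B
        · have h0 : x j = 0 := (hI0 j).1 (mem_inter.1 hjB).1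
          simp only [hy, hjA, if_neg, not_false_iff, hjB, if_pos]
          rw [h0]; linarith
        · simp only [hy, hjA, hjB, if_neg, not_false_iff]
          have := hx.1.1 j; linarith
    · intro a b hab
      have hfeas := hx.1.2 hab
      have cover := hS0 hab
      have main : ∀ c d : V, G.Adj c d → c ∈ A → 1 ≤ y c + y d := by
        intro c d hcd hcA
        have hc1 : x c = 1 := (hI1 c).1 (mem_sdiff.1 hcA).1
        have hcS : c ∉ S0 := (mem_sdiff.1 hcA).2
        have hdS : d ∈ S0 := by
          rcases hS0 hcd with h | h
          · exact absurd h hcS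
          · exact h
        have hdA : d ∉ A := fun hdA => (mem_sdiff.1 hdA).2 hdS
        have hyc : y c = 1 - ε := by
          simp only [hy, hcA, if_pos, hABdisj c hcA, if_neg, not_false_iff, hc1]; ring
        by_cases hdB : d ∈ B
        · have hd0 : x d = 0 := (hI0 d).1 (mem_inter.1 hdB).1
          have hyd : y d = ε := by
            simp only [hy, hdA, if_neg, not_false_iff, hdB, if_pos, hd0]; ring
          rw [hyc, hyd]; linarith
        · have hyd : y d = x d := by
            simp only [hy, hdA, hdB, if_neg, not_false_iff]; ring
          have hdI0 : d ∉ I0 := fun h => hdB (mem_inter.2 ⟨h, hdS⟩)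
          have hxd : 0 < x d := lt_of_le_of_ne (hx.1.1 d) (fun h => hdI0 ((hI0 d).2 h.symm))
          have := hεle d hxd
          rw [hyc, hyd]; linarith
      by_cases haA : a ∈ A
      · exact main a b hab haA
      · by_cases hbA : b ∈ A
        · have := main b a hab.symm hbA; linarith
        · have hya : x a ≤ y a := by
            simp only [hy, haA, if_neg, not_false_iff]
            split <;> linarith
          have hyb : x b ≤ y b := by
            simp only [hy, hbA, if_neg, not_false_iff]
            split <;> linarith
          linarith
  have hsum : ∑ j : V, y j = ∑ j : V, x j - ε * A.card + ε * B.card := by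
    simp only [hy]
    rw [Finset.sum_add_distrib, Finset.sum_sub_distrib]
    congr 1
    · congr 1
      rw [Finset.sum_ite_mem, univ_inter, Finset.sum_const, nsmul_eq_mul, mul_comm]
    · rw [Finset.sum_ite_mem, univ_inter, Finset.sum_const, nsmul_eq_mul, mul_comm]
  have hopt := hx.2 y hyfeas
  rw [hsum] at hopt
  have : ε * A.card ≤ ε * B.card := by linarith
  have hcard : (A.card : ℝ) ≤ B.card := le_of_mul_le_mul_left (by linarith) hεpos
  exact_mod_cast hcard

/-- Let `x*` be an optimal solution of LPR on `G`, `I₀ = {i : x*_i = 0}`,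
`I₁ = {i : x*_i = 1}`, `Ḡ = G \\ (I₀ ∪ I₁)` and `γ ≥ 1`.  If `R` is a `γ`-optimal
vertex cover of `Ḡ` (a cover of size at most `γ` times that of any optimal cover of
`Ḡ`), then `R ∪ I₁` is a `γ`-optimal vertex cover of `G`. -/
theorem nemhauser_trotter_gamma_optimal_cover (G : SimpleGraph V) (xstar : V → ℝ)
    (hx : LPOptimal G xstar) (I0 I1 : Finset V)
    (hI0 : ∀ i : V, i ∈ I0 ↔ xstar i = 0) (hI1 : ∀ i : V, i ∈ I1 ↔ xstar i = 1)
    (γ : ℝ) (hγ : 1 ≤ γ) (R : Finset V)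
    (hR : IsVertexCover (DeleteVerts G (I0 ∪ I1)) R)
    (hRγ : ∀ T : Finset V, IsOptimalVertexCover (DeleteVerts G (I0 ∪ I1)) T →
      (R.card : ℝ) ≤ γ * T.card) :
    IsVertexCover G (R ∪ I1) ∧
      ∀ S0 : Finset V, IsOptimalVertexCover G S0 →
        ((R ∪ I1).card : ℝ) ≤ γ * S0.card := by
  classical
  have hcover : IsVertexCover G (R ∪ I1) := by
    intro a b hab
    by_cases haI1 : a ∈ I1
    · exact Or.inl (mem_union_right _ haI1)
    by_cases hbI1 : b ∈ I1
    · exact Or.inr (mem_union_right _ hbI1)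
    by_cases haI0 : a ∈ I0
    · -- then x b = 1, so b ∈ I1, contradiction
      have h0 : xstar a = 0 := (hI0 a).1 haI0
      have h1 : 1 ≤ xstar a + xstar b := hx.1.2 hab
      have hb1 : xstar b = 1 := le_antisymm (lp_le_one G xstar hx b) (by linarith)
      exact absurd ((hI1 b).2 hb1) hbI1
    by_cases hbI0 : b ∈ I0
    · have h0 : xstar b = 0 := (hI0 b).1 hbI0
      have h1 : 1 ≤ xstar a + xstar b := hx.1.2 hab
      have ha1 : xstar a = 1 := le_antisymm (lp_le_one G xstar hx a) (by linarith)
      exact absurd ((hI1 a).2 ha1) haI1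
    · have : (DeleteVerts G (I0 ∪ I1)).Adj a b :=
        ⟨hab, by simp [haI0, haI1], by simp [hbI0, hbI1]⟩
      rcases hR this with h | h
      · exact Or.inl (mem_union_left _ h)
      · exact Or.inr (mem_union_left _ h)
  refine ⟨hcover, fun S0 hS0 => ?_⟩
  -- get an optimal cover T* of the reduced graph
  have hexT : ∃ T : Finset V, IsOptimalVertexCover (DeleteVerts G (I0 ∪ I1)) T := by
    have hne : (univ.filter (fun T : Finset V => IsVertexCover (DeleteVerts G (I0 ∪ I1)) T)).Nonempty := by
      refine ⟨univ, ?_⟩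
      simp only [mem_filter, mem_univ, true_and]
      intro a b _; exact Or.inl (mem_univ a)
    obtain ⟨T, hTmem, hTmin⟩ := Finset.exists_min_image _ Finset.card hne
    refine ⟨T, (mem_filter.1 hTmem).2, fun T' hT' => hTmin T' (by simp [hT'])⟩
  obtain ⟨T, hT⟩ := hexT
  have hRT : (R.card : ℝ) ≤ γ * T.card := hRγ T hT
  -- S0 \ (I0 ∪ I1) covers the reduced graph
  have hS0red : IsVertexCover (DeleteVerts G (I0 ∪ I1)) (S0 \ (I0 ∪ I1)) := by
    intro a b hab
    rcases hS0.1 hab.1 with h | h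
    · exact Or.inl (mem_sdiff.2 ⟨h, hab.2.1⟩)
    · exact Or.inr (mem_sdiff.2 ⟨h, hab.2.2⟩)
  have hTle : T.card ≤ (S0 \ (I0 ∪ I1)).card := hT.2 _ hS0red
  have hI1le : (I1 \ S0).card ≤ (I0 ∩ S0).card :=
    key_count G xstar hx I0 I1 hI0 hI1 S0 hS0.1
  -- |I1| ≤ |S0 ∩ (I0 ∪ I1)|
  have hI0I1 : Disjoint I0 I1 := by
    rw [Finset.disjoint_left]
    intro i hi0 hi1
    have h0 := (hI0 i).1 hi0
    have h1 := (hI1 i).1 hi1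
    rw [h0] at h1; norm_num at h1
  have hI1card : I1.card ≤ (S0 ∩ (I0 ∪ I1)).card := by
    have h1 : I1.card = (I1 ∩ S0).card + (I1 \ S0).card :=
      (Finset.card_inter_add_card_sdiff I1 S0).symm
    have h2 : (I1 ∩ S0).card + (I0 ∩ S0).card = ((I1 ∪ I0) ∩ S0).card := by
      rw [Finset.union_inter_distrib_right]
      exact (Finset.card_union_of_disjoint (by
        exact Finset.disjoint_of_subset_left (Finset.inter_subset_left)
          (Finset.disjoint_of_subset_right (Finset.inter_subset_left) hI0I1.symm))).symm
    have h3 : (I1 ∪ I0) ∩ S0 = S0 ∩ (I0 ∪ I1) := by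
      rw [Finset.inter_comm, Finset.union_comm]
    rw [h3] at h2
    omega
  -- combine
  have hTI1 : T.card + I1.card ≤ S0.card := by
    have := Finset.card_inter_add_card_sdiff S0 (I0 ∪ I1)
    omega
  have hcardU : ((R ∪ I1).card : ℝ) ≤ (R.card : ℝ) + I1.card := by
    exact_mod_cast Finset.card_union_le R I1
  have hI1γ : (I1.card : ℝ) ≤ γ * I1.card := le_mul_of_one_le_left (by positivity) hγ
  have : ((R ∪ I1).card : ℝ) ≤ γ * T.card + γ * I1.card := by linarith
  have hfin : γ * (T.card : ℝ) + γ * I1.card ≤ γ * S0.card := by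
    have h4 : (T.card : ℝ) + I1.card ≤ S0.card := by exact_mod_cast hTI1
    nlinarith
  linarith
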